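/- Let A be an associative (not necessarily unital) algebra over a field F, let d : A → A be a linear map, t ∈ A, and set D(x) := d(x) + t. Assume that D(D(a)·b) = D(a)·D(b) = D(a·D(b)) for all a, b ∈ A. Then the bi-affine bracket {a,b} := a·D(b) − D(b)·a + a satisfies the derivative identity {{a,b},c} = {{a,c},b} − {a,b} + {a,{b,c}} for all a, b, c ∈ A; that is, A with this bracket is a derivative Leibniz affgebra. -/
import Mathlib


/-- Let `A` be an associative (not necessarily unital) algebra over a field `F`,
`D(x) = d(x) + t` an affine map with `D(D(a)·b) = D(a)·D(b) = D(a·D(b))`. Then the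
bi-affine bracket `{a,b} := a·D(b) − D(b)·a + a` satisfies the derivative identity
`{{a,b},c} = {{a,c},b} − {a,b} + {a,{b,c}}` (a derivative Leibniz affgebra). -/
theorem associative_affgebra_derivative_leibniz
    {F A : Type*} [Field F] [NonUnitalRing A] [Module F A]
    [SMulCommClass F A A] [IsScalarTower F A A]
    (d : A →ₗ[F] A) (t : A) (D : A → A) (hD : ∀ x, D x = d x + t)
    (h1 : ∀ a b : A, D (D a * b) = D a * D b)
    (h2 : ∀ a b : A, D a * D b = D (a * D b))
    (br : A → A → A) (hbr : ∀ a b, br a b = a * D b - D b * a + a) :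
    ∀ a b c : A, br (br a b) c = br (br a c) b - br a b + br a (br b c) := by
  intro a b c
  have e1 : D b * D c = d (b * D c) + t := by rw [h2, hD]
  have e2 : D c * D b = d (D c * b) + t := by rw [← h1, hD]
  have key : D (b * D c - D c * b + b) = D b * D c - D c * D b + D b := by
    rw [hD, e1, e2, hD b, map_add, map_sub]; abel
  simp only [hbr]
  rw [key]
  noncomm_ring
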